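/- Let G be a topological group acting continuously on a topological space X satisfying property (a): for every x ∈ X and every open neighborhood O of the identity, there exists y ∈ X such that x ∈ interior(closure(O·y)). Let O be a symmetric open neighborhood of the identity with O·O·O ⊆ V for some open neighborhood V of the identity. Then for every x ∈ X there exists z ∈ X such that the star of x in the cover {closure(O·w) : w ∈ X} is contained in closure(V·z); i.e., whenever x ∈ closure(O·y), we have closure(O·y) ⊆ closure(V·z). -/

import Mathlib

open Pointwise

theorem stmt9 {G X : Type*} [Group G] [TopologicalSpace G] [IsTopologicalGroup G]
    [TopologicalSpace X] [MulAction G X] [ContinuousSMul G X]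
    (ha : ∀ (x : X) (O : Set G), IsOpen O → (1 : G) ∈ O →
      ∃ y : X, x ∈ interior (closure ((fun g => g • y) '' O)))
    (O V : Set G) (hO : IsOpen O) (hOe : (1 : G) ∈ O) (hOsym : O⁻¹ = O)
    (hV : IsOpen V) (hVe : (1 : G) ∈ V) (hOOO : O * O * O ⊆ V)
    (x : X) :
    ∃ z : X, ∀ y : X, x ∈ closure ((fun g => g • y) '' O) →
      closure ((fun g => g • y) '' O) ⊆ closure ((fun g => g • z) '' V) := by
  obtain ⟨z, hz⟩ := ha x O hO hOe
  refine ⟨z, fun y hxy => ?_⟩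
  have hne := mem_closure_iff.mp hxy _ isOpen_interior hz
  obtain ⟨p, hp1, ⟨g, hg, rfl⟩⟩ := hne
  have hp' : g • y ∈ closure ((fun g => g • z) '' O) := interior_subset hp1
  apply closure_minimal ?_ isClosed_closure
  rintro _ ⟨h, hh, rfl⟩
  have key : h • y ∈ (h * g⁻¹) • closure ((fun g => g • z) '' O) :=
    ⟨g • y, hp', by simp [smul_smul, mul_assoc]⟩
  rw [← closure_smul] at key
  refine closure_mono ?_ key
  rintro _ ⟨_, ⟨g', hg', rfl⟩, rfl⟩
  have hginv : g⁻¹ ∈ O := by rw [← hOsym]; exact Set.inv_mem_inv.mpr hg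
  exact ⟨h * g⁻¹ * g', hOOO (Set.mul_mem_mul (Set.mul_mem_mul hh hginv) hg'),
    by simp [smul_smul, mul_assoc]⟩
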